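/- For integers L ≥ 0, t ≥ 0, and n ≥ L + t + 1, ∑_{s=0}^{n-L-t} C(n-L-t, s) / C(n-t, L+s) = (n - t + 1)/(L + 1). -/

import Mathlib

open Finset

lemma binom_key (L m : ℕ) :
    ∑ s ∈ Finset.range (m + 1),
        (Nat.choose m s : ℝ) / (Nat.choose (L + m) (L + s) : ℝ)
      = ((L : ℝ) + (m : ℝ) + 1) / ((L : ℝ) + 1) := by
  have hLm : (0 : ℝ) < (Nat.choose (L + m) L : ℝ) := by
    exact_mod_cast Nat.choose_pos (Nat.le_add_right L m)
  have hstep : ∀ s ∈ Finset.range (m + 1),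
      (Nat.choose m s : ℝ) / (Nat.choose (L + m) (L + s) : ℝ)
        = (Nat.choose (L + s) L : ℝ) / (Nat.choose (L + m) L : ℝ) := by
    intro s hs
    have hsm : s ≤ m := Nat.lt_succ_iff.mp (Finset.mem_range.mp hs)
    have hpos : (0 : ℝ) < (Nat.choose (L + m) (L + s) : ℝ) := by
      exact_mod_cast Nat.choose_pos (by omega)
    have hnat : Nat.choose (L + m) (L + s) * Nat.choose (L + s) L
        = Nat.choose (L + m) L * Nat.choose m s := by
      have := Nat.choose_mul (n := L + m) (k := L + s) (s := L)
        (by omega)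
      simpa using this
    rw [div_eq_div_iff hpos.ne' hLm.ne']
    have : ((Nat.choose (L + m) (L + s) * Nat.choose (L + s) L : ℕ) : ℝ)
        = ((Nat.choose (L + m) L * Nat.choose m s : ℕ) : ℝ) := by
      exact_mod_cast congrArg Nat.cast hnat
    push_cast at this
    linarith
  rw [Finset.sum_congr rfl hstep, ← Finset.sum_div]
  have hsum : ∑ s ∈ Finset.range (m + 1), (Nat.choose (L + s) L : ℝ)
      = (Nat.choose (m + L + 1) (L + 1) : ℝ) := by
    have := Nat.sum_range_add_choose m L
    rw [show (∑ s ∈ Finset.range (m + 1), (Nat.choose (L + s) L : ℝ))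
        = ((∑ s ∈ Finset.range (m + 1), Nat.choose (s + L) L : ℕ) : ℝ) by
      push_cast; exact Finset.sum_congr rfl fun s _ => by rw [Nat.add_comm]]
    rw [this]
  rw [hsum]
  have hkey : (Nat.choose (m + L + 1) (L + 1) : ℝ) * ((L : ℝ) + 1)
      = ((L : ℝ) + m + 1) * (Nat.choose (L + m) L : ℝ) := by
    have := Nat.add_one_mul_choose_eq (L + m) L
    have hcast : ((Nat.succ (L + m) * Nat.choose (L + m) L : ℕ) : ℝ)
        = ((Nat.choose (L + m + 1) (L + 1) * (L + 1) : ℕ) : ℝ) := by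
      exact_mod_cast congrArg Nat.cast this
    push_cast at hcast
    rw [show m + L + 1 = L + m + 1 by omega]
    linarith
  rw [div_eq_div_iff hLm.ne' (by positivity : ((L:ℝ) + 1) ≠ 0)]
  linarith

theorem binom_sum_identity_shapley_interaction (n L t : ℕ) (h : L + t + 1 ≤ n) :
    ∑ s ∈ Finset.range (n - L - t + 1),
        (Nat.choose (n - L - t) s : ℝ) / (Nat.choose (n - t) (L + s) : ℝ)
      = ((n : ℝ) - (t : ℝ) + 1) / ((L : ℝ) + 1) := by
  have hm : n - L - t = n - t - L := by omega
  have hnt : n - t = L + (n - L - t) := by omega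
  have hcast : ((n : ℝ) - (t : ℝ) + 1) = ((L : ℝ) + ((n - L - t : ℕ) : ℝ) + 1) := by
    have : ((n - L - t : ℕ) : ℝ) = (n : ℝ) - L - t := by
      have : (L : ℝ) + t + 1 ≤ n := by exact_mod_cast h
      push_cast [Nat.sub_sub]
      rw [Nat.cast_sub (by omega)]
      push_cast
      ring
    rw [this]; ring
  rw [hcast, hnt]
  exact binom_key L (n - L - t)
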